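/- Let (G,Γ₁,Γ₂) be a boundary triple for S. Then for every non-real complex number z, the restriction of Γ₁ to the deficiency space N_z = ker(S* − z) is a bijection from N_z onto G. -/

import Mathlib

open ContinuousLinearMap

variable {H : Type*} [NormedAddCommGroup H] [InnerProductSpace ℂ H] [CompleteSpace H]
variable {G : Type*} [NormedAddCommGroup G] [InnerProductSpace ℂ G] [CompleteSpace G]

/-- The operator `M^{A,B}` on `G × G`, `(x₁,x₂) ↦ (A x₁ - B x₂, B x₁ + A x₂)`. -/
noncomputable def MAB (A B : G →L[ℂ] G) : (G × G) →L[ℂ] (G × G) :=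
  ((A.comp (fst ℂ G G)) - (B.comp (snd ℂ G G))).prod
    ((B.comp (fst ℂ G G)) + (A.comp (snd ℂ G G)))

/-- A bounded operator is boundedly invertible if it has a bounded two-sided inverse. -/
def IsBoundedlyInvertible {E F : Type*} [NormedAddCommGroup E] [NormedSpace ℂ E]
    [NormedAddCommGroup F] [NormedSpace ℂ F] (T : E →L[ℂ] F) : Prop :=
  ∃ T' : F →L[ℂ] E, (∀ x, T' (T x) = x) ∧ (∀ y, T (T' y) = y)

/-- A densely defined operator is symmetric if `⟪Sφ, ψ⟫ = ⟪φ, Sψ⟫` on its domain. -/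
def IsSymmetricPMap (S : H →ₗ.[ℂ] H) : Prop :=
  ∀ φ ψ : S.domain, (inner ℂ (S φ) (ψ : H) : ℂ) = inner ℂ (φ : H) (S ψ)

/-- A boundary triple `(G, Γ₁, Γ₂)` for a symmetric operator `S`: two boundary maps
on `dom S*` satisfying the abstract Green identity and joint surjectivity. -/
structure BoundaryTriple (S : H →ₗ.[ℂ] H) (G : Type*) [NormedAddCommGroup G]
    [InnerProductSpace ℂ G] [CompleteSpace G] where
  Γ₁ : S.adjoint.domain →ₗ[ℂ] G
  Γ₂ : S.adjoint.domain →ₗ[ℂ] G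
  green : ∀ φ ψ : S.adjoint.domain,
    (inner ℂ (φ : H) (S.adjoint ψ) : ℂ) - inner ℂ (S.adjoint φ) (ψ : H)
      = (inner ℂ (Γ₁ φ) (Γ₂ ψ) : ℂ) - inner ℂ (Γ₂ φ) (Γ₁ ψ)
  surj : Function.Surjective fun φ : S.adjoint.domain => (Γ₁ φ, Γ₂ φ)

/-- The restriction of a partially defined operator `T` to a submodule `K` of its domain. -/
noncomputable def pmapRestrict (T : H →ₗ.[ℂ] H) (K : Submodule ℂ T.domain) : H →ₗ.[ℂ] H where
  domain := K.map T.domain.subtype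
  toFun := (T.toFun.comp K.subtype).comp
    (Submodule.equivMapOfInjective T.domain.subtype
      (Submodule.injective_subtype T.domain) K).symm.toLinearMap

/-- The distinguished extension `H⁰`: the restriction of `S*` to `ker Γ₁`. -/
noncomputable def H0 (S : H →ₗ.[ℂ] H) (BT : BoundaryTriple S G) : H →ₗ.[ℂ] H :=
  pmapRestrict S.adjoint (LinearMap.ker BT.Γ₁)

/-- The extension `H^{A,B}`: the restriction of `S*` to `{φ : A Γ₁ φ = B Γ₂ φ}`. -/
noncomputable def HAB (S : H →ₗ.[ℂ] H) (BT : BoundaryTriple S G) (A B : G →L[ℂ] G) :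
    H →ₗ.[ℂ] H :=
  pmapRestrict S.adjoint
    (LinearMap.ker ((A.toLinearMap.comp BT.Γ₁) - (B.toLinearMap.comp BT.Γ₂)))

/-- `R` is the resolvent of `T` at `z`: a bounded, everywhere defined two-sided inverse
of `T - z`. -/
def IsResolventOf (T : H →ₗ.[ℂ] H) (z : ℂ) (R : H →L[ℂ] H) : Prop :=
  (∀ f : H, ∃ φ : T.domain, (φ : H) = R f ∧ T φ - z • (φ : H) = f) ∧
  (∀ φ : T.domain, R (T φ - z • (φ : H)) = φ)

/-- `z` is in the resolvent set of `T`. -/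
def InResolventSet (T : H →ₗ.[ℂ] H) (z : ℂ) : Prop := ∃ R, IsResolventOf T z R

/-- `γz` is the `Γ`-field at `z`: the inverse of `Γ₁` restricted to the deficiency
space `N_z = ker (S* - z)`. -/
def IsGammaField (S : H →ₗ.[ℂ] H) (BT : BoundaryTriple S G) (z : ℂ) (γz : G →L[ℂ] H) : Prop :=
  (∀ ξ : G, ∃ φ : S.adjoint.domain, (φ : H) = γz ξ ∧ S.adjoint φ = z • (φ : H) ∧ BT.Γ₁ φ = ξ) ∧
  (∀ φ : S.adjoint.domain, S.adjoint φ = z • (φ : H) → γz (BT.Γ₁ φ) = (φ : H))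

/-- `Qz` is the `Q`-function (Weyl function) at `z`: `Qz = Γ₂ ∘ γz`. -/
def IsQFunction (S : H →ₗ.[ℂ] H) (BT : BoundaryTriple S G) (z : ℂ)
    (γz : G →L[ℂ] H) (Qz : G →L[ℂ] G) : Prop :=
  IsGammaField S BT z γz ∧
    ∀ φ : S.adjoint.domain, S.adjoint φ = z • (φ : H) → Qz (BT.Γ₁ φ) = BT.Γ₂ φ

namespace BTaux

variable {S : H →ₗ.[ℂ] H}

/-- If `⟪a, Γ₂ χ⟫ = 0` for all `χ ∈ ker Γ₁`, then `a = 0`. -/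
lemma eq_zero_of_inner_gamma2 (BT : BoundaryTriple S G) (a : G)
    (h : ∀ χ : S.adjoint.domain, BT.Γ₁ χ = 0 → (inner ℂ a (BT.Γ₂ χ) : ℂ) = 0) : a = 0 := by
  obtain ⟨ψ, hψ⟩ := BT.surj (0, a)
  have h1 : BT.Γ₁ ψ = 0 := congrArg Prod.fst hψ
  have h2 : BT.Γ₂ ψ = a := congrArg Prod.snd hψ
  have := h ψ h1
  rw [h2] at this
  exact inner_self_eq_zero.mp this

/-- Green's identity simplified when `Γ₁ χ = 0`. -/
lemma green_ker (BT : BoundaryTriple S G) (φ χ : S.adjoint.domain) (hχ : BT.Γ₁ χ = 0) :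
    (inner ℂ (φ : H) (S.adjoint χ) : ℂ) - inner ℂ (S.adjoint φ) (χ : H)
      = inner ℂ (BT.Γ₁ φ) (BT.Γ₂ χ) := by
  have := BT.green φ χ
  rwa [hχ, inner_zero_right, sub_zero] at this

/-- Lower bound `|Im w| ‖χ‖ ≤ ‖(S* - w) χ‖` for `χ ∈ ker Γ₁`. -/
lemma lower_bound (BT : BoundaryTriple S G) (χ : S.adjoint.domain) (hχ : BT.Γ₁ χ = 0)
    (w : ℂ) : |w.im| * ‖(χ : H)‖ ≤ ‖S.adjoint χ - w • (χ : H)‖ := by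
  have hreal : (inner ℂ (χ : H) (S.adjoint χ) : ℂ) = inner ℂ (S.adjoint χ) (χ : H) := by
    have := green_ker BT χ χ hχ
    rw [hχ, inner_zero_left] at this
    exact sub_eq_zero.mp this
  have him : (inner ℂ (χ : H) (S.adjoint χ) : ℂ).im = 0 := by
    have : (starRingEnd ℂ) (inner ℂ (χ : H) (S.adjoint χ) : ℂ)
        = (inner ℂ (χ : H) (S.adjoint χ) : ℂ) := by
      rw [inner_conj_symm]; exact hreal.symm
    have := Complex.conj_eq_iff_im.mp this
    exact this
  set c : ℂ := inner ℂ (χ : H) (S.adjoint χ - w • (χ : H)) with hc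
  have hcval : c = (inner ℂ (χ : H) (S.adjoint χ) : ℂ) - w * inner ℂ (χ : H) (χ : H) := by
    rw [hc, inner_sub_right, inner_smul_right]
  have hselfre : (inner ℂ (χ : H) (χ : H) : ℂ) = (‖(χ : H)‖ ^ 2 : ℝ) := by
    exact_mod_cast inner_self_eq_norm_sq_to_K (𝕜 := ℂ) (χ : H)
  have hcim : c.im = -(w.im * ‖(χ : H)‖ ^ 2) := by
    rw [hcval, hselfre]
    simp only [Complex.sub_im, Complex.mul_im, him, ← Complex.ofReal_pow, Complex.ofReal_re,
      Complex.ofReal_im, zero_sub, mul_zero, neg_add, neg_zero, add_zero]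
    ring
  have h1 : |c.im| ≤ ‖c‖ := Complex.abs_im_le_norm c
  have h2 : ‖c‖ ≤ ‖(χ : H)‖ * ‖S.adjoint χ - w • (χ : H)‖ := by
    have := norm_inner_le_norm (𝕜 := ℂ) (χ : H) (S.adjoint χ - w • (χ : H))
    exact this
  have h3 : |w.im| * ‖(χ : H)‖ ^ 2 ≤ ‖(χ : H)‖ * ‖S.adjoint χ - w • (χ : H)‖ := by
    calc |w.im| * ‖(χ : H)‖ ^ 2 = |c.im| := by
          rw [hcim, abs_neg, abs_mul, abs_of_nonneg (by positivity : (0:ℝ) ≤ ‖(χ:H)‖ ^ 2)]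
      _ ≤ ‖c‖ := h1
      _ ≤ _ := h2
  rcases eq_or_lt_of_le (norm_nonneg (χ : H)) with h0 | h0
  · rw [← h0, mul_zero]; exact norm_nonneg _
  · nlinarith [h3]


/-- Construct an element of the adjoint domain. -/
lemma mem_adj (hdense : Dense (S.domain : Set H)) (y w : H)
    (h : ∀ u : S.domain, (inner ℂ y (S u) : ℂ) = inner ℂ w ((u : H) : H)) :
    ∃ Y : S.adjoint.domain, (Y : H) = y ∧ S.adjoint Y = w := by
  have hy : y ∈ S.adjoint.domain :=
    LinearPMap.mem_adjoint_domain_of_exists y ⟨w, fun u => (h u).symm⟩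
  exact ⟨⟨y, hy⟩, rfl, LinearPMap.adjoint_apply_eq hdense _ fun u => (h u).symm⟩

/-- `Γ₁` vanishes on (the image of) the domain of `S`. -/
lemma gamma1_vanish (hdense : Dense (S.domain : Set H)) (hsymm : IsSymmetricPMap S)
    (BT : BoundaryTriple S G) (U : S.adjoint.domain) (hU : (U : H) ∈ S.domain) :
    BT.Γ₁ U = 0 := by
  have hle : S ≤ S.adjoint := LinearPMap.IsFormalAdjoint.le_adjoint hdense hsymm
  have hfa : S.adjoint.IsFormalAdjoint S := LinearPMap.adjoint_isFormalAdjoint hdense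
  have hTU : S.adjoint U = S ⟨(U : H), hU⟩ := (hle.2 (x := ⟨(U : H), hU⟩) rfl).symm
  apply eq_zero_of_inner_gamma2 BT
  intro χ hχ
  have hg := green_ker BT U χ hχ
  have hfaχ : (inner ℂ (S.adjoint χ) ((U : H)) : ℂ) = inner ℂ ((χ : H)) (S ⟨(U : H), hU⟩) :=
    hfa χ ⟨(U : H), hU⟩
  have hkey : (inner ℂ ((U : H)) (S.adjoint χ) : ℂ) = inner ℂ (S.adjoint U) ((χ : H)) := by
    rw [hTU]
    calc (inner ℂ ((U : H)) (S.adjoint χ) : ℂ)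
        = (starRingEnd ℂ) (inner ℂ (S.adjoint χ) ((U : H))) := (inner_conj_symm _ _).symm
      _ = (starRingEnd ℂ) (inner ℂ ((χ : H)) (S ⟨(U : H), hU⟩)) := by rw [hfaχ]
      _ = inner ℂ (S ⟨(U : H), hU⟩) ((χ : H)) := inner_conj_symm _ _
  rw [hkey, sub_self] at hg
  exact hg.symm

end BTaux

/-- For every non-real `z`, the restriction of `Γ₁` to the deficiency
space `N_z = ker (S* − z)` is a bijection from `N_z` onto `G`. -/
theorem gamma1_restricted_bijective (S : H →ₗ.[ℂ] H)
    (hdense : Dense (S.domain : Set H)) (hclosed : S.IsClosed) (hsymm : IsSymmetricPMap S)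
    (BT : BoundaryTriple S G) (z : ℂ) (hz : z.im ≠ 0) :
    Function.Bijective
      (fun φ : {φ : S.adjoint.domain // S.adjoint φ = z • (φ : H)} => BT.Γ₁ φ.1) := by
  have hle : S ≤ S.adjoint := LinearPMap.IsFormalAdjoint.le_adjoint hdense hsymm
  have hfa : S.adjoint.IsFormalAdjoint S := LinearPMap.adjoint_isFormalAdjoint hdense
  have hzpos : (0 : ℝ) < |z.im| := abs_pos.mpr hz
  constructor
  · -- injectivity
    intro φ ψ hφψ
    have hφψ' : BT.Γ₁ φ.1 = BT.Γ₁ ψ.1 := hφψ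
    have hδ1 : BT.Γ₁ (φ.1 - ψ.1) = 0 := by rw [map_sub, hφψ', sub_self]
    have hδ2 : S.adjoint (φ.1 - ψ.1) - z • ((φ.1 - ψ.1 : S.adjoint.domain) : H) = 0 := by
      rw [S.adjoint.map_sub, Submodule.coe_sub, smul_sub, φ.2, ψ.2]; abel
    have hlb := BTaux.lower_bound BT (φ.1 - ψ.1) hδ1 z
    rw [hδ2, norm_zero] at hlb
    have hnn := norm_nonneg ((φ.1 - ψ.1 : S.adjoint.domain) : H)
    have hnorm : ‖((φ.1 - ψ.1 : S.adjoint.domain) : H)‖ = 0 := by nlinarith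
    have hcoe : ((φ.1 : H)) = (ψ.1 : H) := by
      have h0 := norm_eq_zero.mp hnorm
      rwa [Submodule.coe_sub, sub_eq_zero] at h0
    exact Subtype.ext (Subtype.ext hcoe)
  · -- surjectivity
    intro ξ
    set M : Submodule ℂ H :=
      (LinearMap.ker BT.Γ₁).map
        (S.adjoint.toFun - z • S.adjoint.domain.subtype) with hM
    have hmemM : ∀ g : H,
        g ∈ M ↔ ∃ χ : S.adjoint.domain, BT.Γ₁ χ = 0 ∧ S.adjoint χ - z • (χ : H) = g := by
      intro g
      rw [hM, Submodule.mem_map]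
      constructor
      · rintro ⟨χ, hχ, rfl⟩
        exact ⟨χ, LinearMap.mem_ker.mp hχ, rfl⟩
      · rintro ⟨χ, hχ, rfl⟩
        exact ⟨χ, LinearMap.mem_ker.mpr hχ, rfl⟩
    -- M is closed
    have hMclosed : IsClosed (M : Set H) := by
      apply IsSeqClosed.isClosed
      intro gs g hgs hlim
      choose χs hχker hχval using fun n => (hmemM (gs n)).mp (hgs n)
      have hgsC : CauchySeq gs := hlim.cauchySeq
      have hC : CauchySeq fun n => ((χs n : H)) := by
        rw [Metric.cauchySeq_iff] at hgsC ⊢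
        intro ε hε
        obtain ⟨N, hN⟩ := hgsC (|z.im| * ε) (by positivity)
        refine ⟨N, fun m hm n hn => ?_⟩
        have hd : BT.Γ₁ (χs m - χs n) = 0 := by rw [map_sub, hχker m, hχker n, sub_self]
        have hlb := BTaux.lower_bound BT (χs m - χs n) hd z
        have hLd : S.adjoint (χs m - χs n) - z • ((χs m - χs n : S.adjoint.domain) : H)
            = gs m - gs n := by
          rw [S.adjoint.map_sub, Submodule.coe_sub, smul_sub, ← hχval m, ← hχval n]; abel
        rw [hLd, Submodule.coe_sub] at hlb
        have h2 := hN m hm n hn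
        rw [dist_eq_norm] at h2 ⊢
        nlinarith
      obtain ⟨x, hx⟩ := cauchySeq_tendsto_of_complete hC
      have hTfun : (fun n => S.adjoint (χs n)) = fun n => gs n + z • ((χs n : H)) :=
        funext fun n => eq_add_of_sub_eq (hχval n)
      have hTt : Filter.Tendsto (fun n => S.adjoint (χs n)) Filter.atTop (nhds (g + z • x)) := by
        rw [hTfun]; exact hlim.add (hx.const_smul z)
      have hXex : ∃ Y : S.adjoint.domain, (Y : H) = x ∧ S.adjoint Y = g + z • x := by
        apply BTaux.mem_adj hdense
        intro u
        have hseq : ∀ n, (inner ℂ ((χs n : H)) (S u) : ℂ) = inner ℂ (S.adjoint (χs n)) ((u : H)) :=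
          fun n => (hfa (χs n) u).symm
        have t1 : Filter.Tendsto (fun n => (inner ℂ ((χs n : H)) (S u) : ℂ)) Filter.atTop
            (nhds (inner ℂ x (S u))) := Filter.Tendsto.inner hx tendsto_const_nhds
        have t2 : Filter.Tendsto (fun n => (inner ℂ (S.adjoint (χs n)) ((u : H)) : ℂ)) Filter.atTop
            (nhds (inner ℂ (g + z • x) ((u : H)))) := Filter.Tendsto.inner hTt tendsto_const_nhds
        exact tendsto_nhds_unique (t1.congr hseq) t2
      obtain ⟨X, hXcoe, hXval⟩ := hXex
      have hXker : BT.Γ₁ X = 0 := by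
        apply BTaux.eq_zero_of_inner_gamma2 BT
        intro χ hχ
        have hg := BTaux.green_ker BT X χ hχ
        have hlim1 : ∀ n,
            (inner ℂ ((χs n : H)) (S.adjoint χ) : ℂ) = inner ℂ (S.adjoint (χs n)) ((χ : H)) := by
          intro n
          have hgn := BTaux.green_ker BT (χs n) χ hχ
          rw [hχker n, inner_zero_left] at hgn
          exact sub_eq_zero.mp hgn
        have t1 : Filter.Tendsto (fun n => (inner ℂ ((χs n : H)) (S.adjoint χ) : ℂ)) Filter.atTop
            (nhds (inner ℂ x (S.adjoint χ))) := Filter.Tendsto.inner hx tendsto_const_nhds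
        have t2 : Filter.Tendsto (fun n => (inner ℂ (S.adjoint (χs n)) ((χ : H)) : ℂ)) Filter.atTop
            (nhds (inner ℂ (g + z • x) ((χ : H)))) := Filter.Tendsto.inner hTt tendsto_const_nhds
        have heq : (inner ℂ x (S.adjoint χ) : ℂ) = inner ℂ (g + z • x) ((χ : H)) :=
          tendsto_nhds_unique (t1.congr hlim1) t2
        rw [hXcoe, hXval, heq, sub_self] at hg
        exact hg.symm
      exact (hmemM g).mpr ⟨X, hXker, by rw [hXval, hXcoe, add_sub_cancel_right]⟩
    -- M is all of H
    have hMtop : M = ⊤ := by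
      haveI : CompleteSpace M := hMclosed.completeSpace_coe
      rw [← Submodule.orthogonal_eq_bot_iff, Submodule.eq_bot_iff]
      intro f hf
      rw [Submodule.mem_orthogonal] at hf
      have hfS : ∀ u : S.domain,
          (inner ℂ f (S u) : ℂ) = inner ℂ ((starRingEnd ℂ) z • f) ((u : H)) := by
        intro u
        have hU : ((u : H)) ∈ S.adjoint.domain := hle.1 u.2
        have hTU : S.adjoint ⟨(u : H), hU⟩ = S u := (hle.2 (x := u) (y := ⟨(u : H), hU⟩) rfl).symm
        have hUker : BT.Γ₁ ⟨(u : H), hU⟩ = 0 := BTaux.gamma1_vanish hdense hsymm BT _ u.2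
        have hmem : S u - z • ((u : H)) ∈ M := (hmemM _).mpr ⟨⟨(u : H), hU⟩, hUker, by rw [hTU]⟩
        have h0 : (inner ℂ f (S u - z • ((u : H))) : ℂ) = 0 :=
          inner_eq_zero_symm.mp (hf _ hmem)
        rw [inner_sub_right, inner_smul_right, sub_eq_zero] at h0
        rw [inner_smul_left, Complex.conj_conj]
        exact h0
      obtain ⟨F, hFcoe, hFval⟩ := BTaux.mem_adj hdense f _ hfS
      have hFker : BT.Γ₁ F = 0 := by
        apply BTaux.eq_zero_of_inner_gamma2 BT
        intro χ hχ
        have hg := BTaux.green_ker BT F χ hχ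
        have hmem : S.adjoint χ - z • ((χ : H)) ∈ M := (hmemM _).mpr ⟨χ, hχ, rfl⟩
        have h0 : (inner ℂ f (S.adjoint χ - z • ((χ : H))) : ℂ) = 0 :=
          inner_eq_zero_symm.mp (hf _ hmem)
        rw [inner_sub_right, inner_smul_right, sub_eq_zero] at h0
        rw [hFcoe, hFval, h0, inner_smul_left, Complex.conj_conj, sub_self] at hg
        exact hg.symm
      have hlb := BTaux.lower_bound BT F hFker ((starRingEnd ℂ) z)
      have hFz : S.adjoint F - (starRingEnd ℂ) z • ((F : H)) = 0 := by
        rw [hFval, hFcoe, sub_self]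
      rw [hFz, norm_zero, hFcoe] at hlb
      have him : |((starRingEnd ℂ) z).im| = |z.im| := by
        simp [Complex.conj_im, abs_neg]
      rw [him] at hlb
      have hnn := norm_nonneg f
      have : ‖f‖ = 0 := by nlinarith
      exact norm_eq_zero.mp this
    -- conclude
    obtain ⟨ψ, hψ⟩ := BT.surj (ξ, 0)
    have hψ1 : BT.Γ₁ ψ = ξ := congrArg Prod.fst hψ
    have hfM : S.adjoint ψ - z • ((ψ : H)) ∈ M := by rw [hMtop]; trivial
    obtain ⟨χ, hχker, hχval⟩ := (hmemM _).mp hfM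
    refine ⟨⟨ψ - χ, ?_⟩, ?_⟩
    · have hTχ : S.adjoint χ = S.adjoint ψ - z • ((ψ : H)) + z • ((χ : H)) := by
        rw [← hχval]; abel
      rw [S.adjoint.map_sub, Submodule.coe_sub, smul_sub, hTχ]; abel
    · show BT.Γ₁ (ψ - χ) = ξ
      rw [map_sub, hψ1, hχker, sub_zero]
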